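/- Let (Ω, μ) be a measure space and 2 ≤ p < ∞ with conjugate exponent q = p/(p−1). Then for all f, g ∈ L^p(Ω, μ): ‖f‖_p^q + ‖g‖_p^q ≥ ((1/2)(‖f + g‖_p^p + ‖f − g‖_p^p))^{1/(p−1)}. -/

import Mathlib

open MeasureTheory Real

open Complex Set
open scoped ENNReal NNReal

noncomputable def Complex.abs : AbsoluteValue ℂ ℝ := NormedField.toAbsoluteValue ℂ

@[simp] lemma Complex.abs_apply (z : ℂ) : Complex.abs z = ‖z‖ := rfl

lemma Complex.norm_eq_abs (z : ℂ) : ‖z‖ = Complex.abs z := rfl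

@[simp] lemma Complex.abs_abs (z : ℂ) : |Complex.abs z| = Complex.abs z := abs_norm z

@[simp] lemma Complex.abs_ofReal (r : ℝ) : Complex.abs (r : ℂ) = |r| := Complex.norm_real r

@[simp] lemma Complex.abs_conj (z : ℂ) : Complex.abs ((starRingEnd ℂ) z) = Complex.abs z :=
  Complex.norm_conj z

lemma Complex.sq_abs (z : ℂ) : Complex.abs z ^ 2 = Complex.normSq z := Complex.sq_norm z

lemma Complex.normSq_eq_abs (z : ℂ) : Complex.normSq z = Complex.abs z ^ 2 :=
  Complex.normSq_eq_norm_sq z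

lemma Complex.abs_cpow_eq_rpow_re_of_pos {x : ℝ} (hx : 0 < x) (y : ℂ) :
    Complex.abs ((x : ℂ) ^ y) = x ^ y.re := Complex.norm_cpow_eq_rpow_re_of_pos hx y


noncomputable def ph (x : ℂ) : ℂ := if x = 0 then 0 else x / Complex.abs x

lemma ph_mul_abs (x : ℂ) : ph x * (Complex.abs x : ℂ) = x := by
  unfold ph; split_ifs with h
  · simp [h]
  · have : (Complex.abs x : ℂ) ≠ 0 := by
      simpa using (Complex.abs.ne_zero h)
    field_simp

lemma abs_ph_le_one (x : ℂ) : Complex.abs (ph x) ≤ 1 := by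
  unfold ph; split_ifs with h
  · simp
  · simp [map_div₀, Complex.abs_abs, div_self (norm_ne_zero_iff.mpr h)]

noncomputable def mfun (x : ℂ) (s : ℝ) (z : ℂ) : ℂ :=
  ph x * (Complex.abs x : ℂ) ^ ((s:ℂ) * (1 - z/2))

lemma mfun_diff (x : ℂ) (s : ℝ) : Differentiable ℂ (mfun x s) := by
  by_cases h : x = 0
  · have : mfun x s = fun _ => 0 := by
      funext z; simp [mfun, ph, h]
    rw [this]; exact differentiable_const 0
  · apply Differentiable.const_mul
    apply Differentiable.const_cpow
    · exact (differentiable_const _).sub (differentiable_id.div_const 2) |>.const_mul _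
    · left; simpa using (Complex.abs.ne_zero h)

lemma expo_re (s : ℝ) (z : ℂ) : ((s:ℂ) * (1 - z/2)).re = s * (1 - z.re/2) := by
  simp [Complex.mul_re, Complex.sub_re, Complex.div_re]
  try ring

lemma abs_mfun_le (x : ℂ) {s : ℝ} (hs : 0 < s) (z : ℂ) (hz : z.re ≤ 1) :
    Complex.abs (mfun x s z) ≤ Complex.abs x ^ (s * (1 - z.re/2)) := by
  by_cases h : x = 0
  · simp [mfun, ph, h]
    positivity
  · have hx : 0 < Complex.abs x := Complex.abs.pos h
    rw [mfun, map_mul, Complex.abs_cpow_eq_rpow_re_of_pos hx, expo_re]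
    calc Complex.abs (ph x) * Complex.abs x ^ (s * (1 - z.re/2))
        ≤ 1 * Complex.abs x ^ (s * (1 - z.re/2)) := by
          gcongr; exact abs_ph_le_one x
      _ = _ := one_mul _

lemma cs_two (a b c d : ℝ) (ha : 0 ≤ a) (hb : 0 ≤ b) (hc : 0 ≤ c) (hd : 0 ≤ d) :
    a*c + b*d ≤ Real.sqrt (a^2+b^2) * Real.sqrt (c^2+d^2) := by
  rw [← Real.sqrt_mul (by positivity)]
  rcases le_or_gt (a*c+b*d) 0 with h | h
  · exact h.trans (Real.sqrt_nonneg _)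
  · rw [show a*c+b*d = Real.sqrt ((a*c+b*d)^2) by rw [Real.sqrt_sq h.le]]
    apply Real.sqrt_le_sqrt
    nlinarith [sq_nonneg (a*d - b*c)]

lemma parallelogram (A B : ℂ) :
    Complex.abs (A+B)^2 + Complex.abs (A-B)^2 = 2*(Complex.abs A^2 + Complex.abs B^2) := by
  simp only [Complex.sq_abs, Complex.normSq_apply, Complex.add_re, Complex.add_im,
    Complex.sub_re, Complex.sub_im]
  ring

lemma rpow_le_one_of_le_one {x : ℝ} (h0 : 0 ≤ x) (h1 : x ≤ 1) {e : ℝ} (he : 0 ≤ e) :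
    x ^ e ≤ 1 := Real.rpow_le_one h0 h1 he

lemma sq_rpow_half (x : ℝ) (hx : 0 ≤ x) (q : ℝ) : (x ^ (q/2)) ^ 2 = x ^ q := by
  rw [← Real.rpow_natCast (x ^ (q/2)) 2, ← Real.rpow_mul hx]
  norm_num

lemma trilinear {p q : ℝ} (hp : 2 ≤ p) (hq : q = p/(p-1))
    (a₁ a₂ b₁ b₂ : ℂ)
    (ha : Complex.abs a₁ ^ q + Complex.abs a₂ ^ q ≤ 1)
    (hb : Complex.abs b₁ ^ q + Complex.abs b₂ ^ q ≤ 1) :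
    Complex.abs (b₁ * (a₁ + a₂) + b₂ * (a₁ - a₂)) ≤ (2:ℝ) ^ (1/p : ℝ) := by
  have hp0 : (0:ℝ) < p := by linarith
  have hp1 : (0:ℝ) < p - 1 := by linarith
  have hq0 : (0:ℝ) < q := by rw [hq]; positivity
  set F : ℂ → ℂ := fun z => mfun b₁ q z * (mfun a₁ q z + mfun a₂ q z)
      + mfun b₂ q z * (mfun a₁ q z - mfun a₂ q z) with hF
  have hn : ∀ x : ℂ, (0:ℝ) ≤ Complex.abs x ^ q := fun x => Real.rpow_nonneg (Complex.abs.nonneg x) q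
  have hle1 : ∀ x y : ℂ, Complex.abs x ^ q + Complex.abs y ^ q ≤ 1 → Complex.abs x ≤ 1 := by
    intro x y h
    by_contra hc
    push_neg at hc
    have : (1:ℝ) < Complex.abs x ^ q := (Real.one_lt_rpow_iff_of_pos (by linarith)).mpr (Or.inl ⟨hc, hq0⟩)
    nlinarith [hn y]
  -- differentiability
  have hd : Differentiable ℂ F := by
    apply Differentiable.add
    · exact (mfun_diff b₁ q).mul ((mfun_diff a₁ q).add (mfun_diff a₂ q))
    · exact (mfun_diff b₂ q).mul ((mfun_diff a₁ q).sub (mfun_diff a₂ q))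
  -- generic abs bound
  have hFle : ∀ z : ℂ, Complex.abs (F z) ≤
      Complex.abs (mfun b₁ q z) * Complex.abs (mfun a₁ q z + mfun a₂ q z)
      + Complex.abs (mfun b₂ q z) * Complex.abs (mfun a₁ q z - mfun a₂ q z) := by
    intro z
    calc Complex.abs (F z) ≤ Complex.abs (mfun b₁ q z * (mfun a₁ q z + mfun a₂ q z))
        + Complex.abs (mfun b₂ q z * (mfun a₁ q z - mfun a₂ q z)) := Complex.abs.add_le _ _
      _ = _ := by rw [map_mul, map_mul]
  -- bounded on the strip
  have hB : BddAbove ((norm ∘ F) '' (Complex.HadamardThreeLines.verticalClosedStrip 0 1)) := by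
    refine ⟨4, ?_⟩
    rintro y ⟨z, hz, rfl⟩
    simp only [Function.comp_apply, Complex.norm_eq_abs]
    have hzre : z.re ∈ Set.Icc (0:ℝ) 1 := hz
    have hexp : 0 ≤ q * (1 - z.re/2) := by
      have := hzre.2
      nlinarith
    have hm : ∀ x : ℂ, Complex.abs x ≤ 1 → Complex.abs (mfun x q z) ≤ 1 := by
      intro x hx
      refine (abs_mfun_le x hq0 z hzre.2).trans ?_
      exact Real.rpow_le_one (Complex.abs.nonneg x) hx hexp
    have m1 := hm a₁ (hle1 a₁ a₂ ha)
    have m2 := hm a₂ (by rw [add_comm] at ha; exact hle1 a₂ a₁ ha)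
    have m3 := hm b₁ (hle1 b₁ b₂ hb)
    have m4 := hm b₂ (by rw [add_comm] at hb; exact hle1 b₂ b₁ hb)
    refine (hFle z).trans ?_
    have t1 : Complex.abs (mfun a₁ q z + mfun a₂ q z) ≤ 2 := by
      calc _ ≤ Complex.abs (mfun a₁ q z) + Complex.abs (mfun a₂ q z) := Complex.abs.add_le _ _
        _ ≤ 2 := by linarith
    have t2 : Complex.abs (mfun a₁ q z - mfun a₂ q z) ≤ 2 := by
      calc _ ≤ Complex.abs (mfun a₁ q z) + Complex.abs (mfun a₂ q z) := AbsoluteValue.sub_le_add Complex.abs _ _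
      _ ≤ 2 := by linarith
    nlinarith [Complex.abs.nonneg (mfun b₁ q z), Complex.abs.nonneg (mfun b₂ q z),
      Complex.abs.nonneg (mfun a₁ q z + mfun a₂ q z), Complex.abs.nonneg (mfun a₁ q z - mfun a₂ q z)]
  -- edge re = 0
  have h0 : ∀ z ∈ Complex.re ⁻¹' {0}, ‖F z‖ ≤ 1 := by
    intro z hz
    have hzre : z.re = 0 := hz
    have hm : ∀ x : ℂ, Complex.abs (mfun x q z) ≤ Complex.abs x ^ q := by
      intro x
      have := abs_mfun_le x hq0 z (by rw [hzre]; norm_num)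
      rw [hzre] at this
      simpa using this
    simp only [Complex.norm_eq_abs]
    refine (hFle z).trans ?_
    have m1 := hm a₁; have m2 := hm a₂; have m3 := hm b₁; have m4 := hm b₂
    have t1 : Complex.abs (mfun a₁ q z + mfun a₂ q z) ≤ Complex.abs a₁ ^ q + Complex.abs a₂ ^ q := by
      calc _ ≤ Complex.abs (mfun a₁ q z) + Complex.abs (mfun a₂ q z) := Complex.abs.add_le _ _
        _ ≤ _ := by linarith
    have t2 : Complex.abs (mfun a₁ q z - mfun a₂ q z) ≤ Complex.abs a₁ ^ q + Complex.abs a₂ ^ q := by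
      calc _ ≤ Complex.abs (mfun a₁ q z) + Complex.abs (mfun a₂ q z) := AbsoluteValue.sub_le_add Complex.abs _ _
        _ ≤ _ := by linarith
    nlinarith [hn a₁, hn a₂, hn b₁, hn b₂, Complex.abs.nonneg (mfun b₁ q z),
      Complex.abs.nonneg (mfun b₂ q z), hm b₁, hm b₂,
      Complex.abs.nonneg (mfun a₁ q z + mfun a₂ q z),
      Complex.abs.nonneg (mfun a₁ q z - mfun a₂ q z)]
  -- edge re = 1
  have h1 : ∀ z ∈ Complex.re ⁻¹' {1}, ‖F z‖ ≤ Real.sqrt 2 := by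
    intro z hz
    have hzre : z.re = 1 := hz
    have hm : ∀ x : ℂ, Complex.abs (mfun x q z) ≤ Complex.abs x ^ (q/2) := by
      intro x
      have := abs_mfun_le x hq0 z (by rw [hzre])
      rw [hzre] at this
      rwa [show q * (1 - (1:ℝ)/2) = q/2 by ring] at this
    simp only [Complex.norm_eq_abs]
    refine (hFle z).trans ?_
    set A₁ := Complex.abs (mfun a₁ q z)
    set A₂ := Complex.abs (mfun a₂ q z)
    set B₁ := Complex.abs (mfun b₁ q z)
    set B₂ := Complex.abs (mfun b₂ q z)
    set U := Complex.abs (mfun a₁ q z + mfun a₂ q z)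
    set V := Complex.abs (mfun a₁ q z - mfun a₂ q z)
    have hpar : U^2 + V^2 = 2*(A₁^2 + A₂^2) := parallelogram _ _
    have hcs : B₁ * U + B₂ * V ≤ Real.sqrt (B₁^2+B₂^2) * Real.sqrt (U^2+V^2) :=
      cs_two _ _ _ _ (Complex.abs.nonneg _) (Complex.abs.nonneg _)
        (Complex.abs.nonneg _) (Complex.abs.nonneg _)
    have hA : A₁^2 + A₂^2 ≤ 1 := by
      have s1 : A₁^2 ≤ Complex.abs a₁ ^ q := by
        rw [← sq_rpow_half (Complex.abs a₁) (Complex.abs.nonneg _) q]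
        have := hm a₁
        nlinarith [Complex.abs.nonneg (mfun a₁ q z), Real.rpow_nonneg (Complex.abs.nonneg a₁) (q/2)]
      have s2 : A₂^2 ≤ Complex.abs a₂ ^ q := by
        rw [← sq_rpow_half (Complex.abs a₂) (Complex.abs.nonneg _) q]
        have := hm a₂
        nlinarith [Complex.abs.nonneg (mfun a₂ q z), Real.rpow_nonneg (Complex.abs.nonneg a₂) (q/2)]
      linarith
    have hBsq : B₁^2 + B₂^2 ≤ 1 := by
      have s1 : B₁^2 ≤ Complex.abs b₁ ^ q := by
        rw [← sq_rpow_half (Complex.abs b₁) (Complex.abs.nonneg _) q]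
        have := hm b₁
        nlinarith [Complex.abs.nonneg (mfun b₁ q z), Real.rpow_nonneg (Complex.abs.nonneg b₁) (q/2)]
      have s2 : B₂^2 ≤ Complex.abs b₂ ^ q := by
        rw [← sq_rpow_half (Complex.abs b₂) (Complex.abs.nonneg _) q]
        have := hm b₂
        nlinarith [Complex.abs.nonneg (mfun b₂ q z), Real.rpow_nonneg (Complex.abs.nonneg b₂) (q/2)]
      linarith
    calc B₁ * U + B₂ * V ≤ Real.sqrt (B₁^2+B₂^2) * Real.sqrt (U^2+V^2) := hcs
      _ ≤ Real.sqrt 1 * Real.sqrt 2 := by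
          have g1 : Real.sqrt (B₁^2+B₂^2) ≤ Real.sqrt 1 := Real.sqrt_le_sqrt hBsq
          have g2 : Real.sqrt (U^2+V^2) ≤ Real.sqrt 2 := Real.sqrt_le_sqrt (by rw [hpar]; linarith)
          exact mul_le_mul g1 g2 (Real.sqrt_nonneg _) (Real.sqrt_nonneg _)
      _ = Real.sqrt 2 := by rw [Real.sqrt_one, one_mul]
  -- apply three lines
  have hz : ((2/p : ℝ) : ℂ) ∈ Complex.HadamardThreeLines.verticalClosedStrip 0 1 := by
    simp only [Complex.HadamardThreeLines.verticalClosedStrip, Set.mem_preimage,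
      Complex.ofReal_re, Set.mem_Icc]
    constructor
    · positivity
    · rw [div_le_one hp0]; linarith
  have key := Complex.HadamardThreeLines.norm_le_interp_of_mem_verticalClosedStrip₀₁' F hz
    (hd.diffContOnCl) hB h0 h1
  have hre : ((2/p : ℝ) : ℂ).re = 2/p := Complex.ofReal_re _
  rw [hre] at key
  have hmq : ∀ x : ℂ, mfun x q ((2/p : ℝ) : ℂ) = x := by
    intro x
    have hexp : (q:ℂ) * (1 - ((2/p : ℝ):ℂ)/2) = 1 := by
      have hr : q * (1 - (2/p)/2) = 1 := by
        rw [hq]; field_simp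
      calc (q:ℂ) * (1 - ((2/p : ℝ):ℂ)/2) = ((q * (1 - (2/p)/2) : ℝ) : ℂ) := by push_cast; ring
        _ = 1 := by rw [hr]; norm_num
    rw [mfun, hexp, Complex.cpow_one, ph_mul_abs]
  have hFθ : F ((2/p : ℝ) : ℂ) = b₁ * (a₁ + a₂) + b₂ * (a₁ - a₂) := by
    simp only [hF, hmq]
  rw [hFθ, Complex.norm_eq_abs] at key
  refine key.trans ?_
  rw [Real.one_rpow, one_mul, Real.sqrt_eq_rpow, ← Real.rpow_mul (by norm_num : (0:ℝ) ≤ 2)]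
  apply le_of_eq
  congr 1
  ring

lemma scalar_clarkson_norm {p q : ℝ} (hp : 2 ≤ p) (hq : q = p/(p-1)) (a₁ a₂ : ℂ)
    (ha : Complex.abs a₁ ^ q + Complex.abs a₂ ^ q ≤ 1) :
    Complex.abs (a₁ + a₂) ^ p + Complex.abs (a₁ - a₂) ^ p ≤ 2 := by
  have hp0 : (0:ℝ) < p := by linarith
  have hp1 : (0:ℝ) < p - 1 := by linarith
  have hq0 : (0:ℝ) < q := by rw [hq]; positivity
  set u := a₁ + a₂ with hu
  set v := a₁ - a₂ with hv
  set S := Complex.abs u ^ p + Complex.abs v ^ p with hS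
  have hS0 : 0 ≤ S := by positivity
  rcases eq_or_lt_of_le hS0 with hS0' | hS0'
  · rw [← hS0']; norm_num
  -- choose dual vector
  set c : ℝ := S ^ (1/q : ℝ) with hc
  have hc0 : 0 < c := Real.rpow_pos_of_pos hS0' _
  set b₁ : ℂ := (starRingEnd ℂ) (ph u) * ((Complex.abs u ^ (p-1) / c : ℝ) : ℂ) with hb₁
  set b₂ : ℂ := (starRingEnd ℂ) (ph v) * ((Complex.abs v ^ (p-1) / c : ℝ) : ℂ) with hb₂
  have habsb : ∀ x : ℂ, Complex.abs ((starRingEnd ℂ) (ph x) * ((Complex.abs x ^ (p-1) / c : ℝ) : ℂ))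
      = Complex.abs x ^ (p-1) / c := by
    intro x
    have h1 : Complex.abs (((Complex.abs x ^ (p-1) / c : ℝ)) : ℂ) = Complex.abs x ^ (p-1) / c := by
      rw [Complex.abs_ofReal]; exact abs_of_nonneg (by positivity)
    rw [map_mul, Complex.abs_conj, h1]
    by_cases h : x = 0
    · simp [h, ph, Real.zero_rpow (show p - 1 ≠ 0 from fun hh => by
        rw [sub_eq_zero] at hh; linarith)]
    · rw [ph, if_neg h, map_div₀, Complex.abs_ofReal, Complex.abs_abs,
        div_self (Complex.abs.ne_zero h), one_mul]
  have hq_ne : q ≠ 0 := ne_of_gt hq0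
  have hcq : c ^ q = S := by
    rw [hc, ← Real.rpow_mul hS0, one_div_mul_cancel hq_ne, Real.rpow_one]
  have hpq : (p-1) * q = p := by rw [hq]; field_simp
  have hbq : ∀ x : ℝ, 0 ≤ x → (x ^ (p-1) / c) ^ q = x ^ p / S := by
    intro x hx
    rw [Real.div_rpow (Real.rpow_nonneg hx _) hc0.le, ← Real.rpow_mul hx, hpq, hcq]
  have hbsum : Complex.abs b₁ ^ q + Complex.abs b₂ ^ q ≤ 1 := by
    rw [hb₁, hb₂, habsb u, habsb v, hbq _ (Complex.abs.nonneg u), hbq _ (Complex.abs.nonneg v),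
      ← add_div, ← hS, div_self (ne_of_gt hS0')]
  have hconj : ∀ x : ℂ, (starRingEnd ℂ) (ph x) * x = (Complex.abs x : ℂ) := by
    intro x
    by_cases h : x = 0
    · simp [ph, h]
    · have hx0 : (Complex.abs x : ℂ) ≠ 0 := by simpa using Complex.abs.ne_zero h
      have hcc : (starRingEnd ℂ) x * x = ((Complex.abs x : ℝ) : ℂ) * ((Complex.abs x : ℝ) : ℂ) := by
        rw [mul_comm, Complex.mul_conj, Complex.normSq_eq_abs]
        push_cast
        ring
      rw [ph, if_neg h, map_div₀, Complex.conj_ofReal, div_mul_eq_mul_div, hcc,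
        mul_div_assoc, div_self hx0, mul_one]
  have hxp : ∀ x : ℝ, 0 ≤ x → x * x ^ (p-1) = x ^ p := by
    intro x hx
    nth_rewrite 1 [← Real.rpow_one x]
    rw [← Real.rpow_add' hx (ne_of_gt (by linarith : (0:ℝ) < 1 + (p-1)))]
    congr 1
    ring
  have hval : b₁ * u + b₂ * v = ((S ^ ((1:ℝ)/p) : ℝ) : ℂ) := by
    have e1 : b₁ * u = ((Complex.abs u ^ p / c : ℝ) : ℂ) := by
      rw [hb₁, mul_comm ((starRingEnd ℂ) (ph u)) _, mul_assoc, hconj u, ← Complex.ofReal_mul,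
        mul_comm (Complex.abs u ^ (p-1) / c) _, ← mul_div_assoc, hxp _ (Complex.abs.nonneg u)]
    have e2 : b₂ * v = ((Complex.abs v ^ p / c : ℝ) : ℂ) := by
      rw [hb₂, mul_comm ((starRingEnd ℂ) (ph v)) _, mul_assoc, hconj v, ← Complex.ofReal_mul,
        mul_comm (Complex.abs v ^ (p-1) / c) _, ← mul_div_assoc, hxp _ (Complex.abs.nonneg v)]
    rw [e1, e2, ← Complex.ofReal_add, ← add_div, ← hS]
    congr 1
    have h1q : 1 - 1/q = 1/p := by rw [hq]; field_simp; ring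
    rw [hc, ← h1q, Real.rpow_sub hS0', Real.rpow_one]
  have key := trilinear hp hq a₁ a₂ b₁ b₂ ha hbsum
  rw [show b₁ * (a₁ + a₂) + b₂ * (a₁ - a₂) = b₁ * u + b₂ * v from rfl, hval,
    Complex.abs_ofReal, _root_.abs_of_nonneg (Real.rpow_nonneg hS0 _)] at key
  have key2 := Real.rpow_le_rpow (Real.rpow_nonneg hS0 _) key hp0.le
  rwa [← Real.rpow_mul hS0, ← Real.rpow_mul (by norm_num : (0:ℝ) ≤ 2),
    one_div_mul_cancel (ne_of_gt hp0), Real.rpow_one, Real.rpow_one] at key2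

lemma scalar_clarkson {p q : ℝ} (hp : 2 ≤ p) (hq : q = p/(p-1)) (a₁ a₂ : ℂ) :
    Complex.abs (a₁ + a₂) ^ p + Complex.abs (a₁ - a₂) ^ p
      ≤ 2 * (Complex.abs a₁ ^ q + Complex.abs a₂ ^ q) ^ (p - 1) := by
  have hp0 : (0:ℝ) < p := by linarith
  have hp1 : (0:ℝ) < p - 1 := by linarith
  have hq0 : (0:ℝ) < q := by rw [hq]; positivity
  set n : ℝ := Complex.abs a₁ ^ q + Complex.abs a₂ ^ q with hn
  have hn0 : 0 ≤ n := by positivity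
  rcases eq_or_lt_of_le hn0 with h0 | h0
  · have h1 : Complex.abs a₁ ^ q = 0 := by
      nlinarith [Real.rpow_nonneg (Complex.abs.nonneg a₁) q,
        Real.rpow_nonneg (Complex.abs.nonneg a₂) q]
    have h2 : Complex.abs a₂ ^ q = 0 := by
      nlinarith [Real.rpow_nonneg (Complex.abs.nonneg a₁) q,
        Real.rpow_nonneg (Complex.abs.nonneg a₂) q]
    rw [Real.rpow_eq_zero_iff_of_nonneg (Complex.abs.nonneg a₁)] at h1
    rw [Real.rpow_eq_zero_iff_of_nonneg (Complex.abs.nonneg a₂)] at h2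
    have ha₁ : a₁ = 0 := by simpa using h1.1
    have ha₂ : a₂ = 0 := by simpa using h2.1
    rw [ha₁, ha₂]
    simp [Real.zero_rpow (ne_of_gt hp0)]
    positivity
  · set c : ℝ := n ^ (1/q : ℝ) with hc
    have hc0 : 0 < c := Real.rpow_pos_of_pos h0 _
    have hcq : c ^ q = n := by
      rw [hc, ← Real.rpow_mul hn0, one_div_mul_cancel (ne_of_gt hq0), Real.rpow_one]
    have habs' : ∀ x : ℂ, Complex.abs (x / (c:ℂ)) = Complex.abs x / c := by
      intro x
      rw [map_div₀, Complex.abs_ofReal, _root_.abs_of_nonneg hc0.le]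
    have hsum : Complex.abs (a₁/(c:ℂ)) ^ q + Complex.abs (a₂/(c:ℂ)) ^ q ≤ 1 := by
      rw [habs', habs', Real.div_rpow (Complex.abs.nonneg _) hc0.le,
        Real.div_rpow (Complex.abs.nonneg _) hc0.le, ← add_div, hcq, ← hn,
        div_self (ne_of_gt h0)]
    have key := scalar_clarkson_norm hp hq (a₁/(c:ℂ)) (a₂/(c:ℂ)) hsum
    rw [← add_div, div_sub_div_same, habs', habs',
      Real.div_rpow (Complex.abs.nonneg _) hc0.le,
      Real.div_rpow (Complex.abs.nonneg _) hc0.le, ← add_div,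
      div_le_iff₀ (by positivity : (0:ℝ) < c ^ p)] at key
    have hcp : c ^ p = n ^ (p - 1) := by
      rw [hc, ← Real.rpow_mul hn0]
      congr 1
      rw [hq]
      field_simp
    calc Complex.abs (a₁ + a₂) ^ p + Complex.abs (a₁ - a₂) ^ p ≤ 2 * c ^ p := key
      _ = 2 * n ^ (p-1) := by rw [hcp]

theorem clarkson_second_inequality_ge_two
    {Ω : Type*} [MeasurableSpace Ω] (μ : Measure Ω) (p q : ℝ) (hp : 2 ≤ p)
    (hq : q = p / (p - 1)) [Fact (1 ≤ ENNReal.ofReal p)]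
    (f g : Lp ℂ (ENNReal.ofReal p) μ) :
    ‖f‖ ^ q + ‖g‖ ^ q ≥
      ((1 / 2) * (‖f + g‖ ^ p + ‖f - g‖ ^ p)) ^ (1 / (p - 1)) := by
  have hp0 : (0:ℝ) < p := by linarith
  have hr1 : (1:ℝ) ≤ p - 1 := by linarith
  have hr0 : (0:ℝ) < p - 1 := by linarith
  have hq0 : (0:ℝ) < q := by rw [hq]; positivity
  have hP0 : (ENNReal.ofReal p) ≠ 0 := by
    simp only [ne_eq, ENNReal.ofReal_eq_zero, not_le]
    linarith
  have hPtop : (ENNReal.ofReal p) ≠ ∞ := ENNReal.ofReal_ne_top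
  have hPtoReal : (ENNReal.ofReal p).toReal = p := ENNReal.toReal_ofReal hp0.le
  have hfm : AEStronglyMeasurable (⇑f) μ := Lp.aestronglyMeasurable f
  have hgm : AEStronglyMeasurable (⇑g) μ := Lp.aestronglyMeasurable g
  set If := ∫⁻ x, (‖f x‖₊ : ℝ≥0∞) ^ p ∂μ with hIf
  set Ig := ∫⁻ x, (‖g x‖₊ : ℝ≥0∞) ^ p ∂μ with hIg
  set Iu := ∫⁻ x, (‖f x + g x‖₊ : ℝ≥0∞) ^ p ∂μ with hIu
  set Iv := ∫⁻ x, (‖f x - g x‖₊ : ℝ≥0∞) ^ p ∂μ with hIv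
  set Fq : Ω → ℝ≥0∞ := fun x => (‖f x‖₊ : ℝ≥0∞) ^ q with hFq
  set Gq : Ω → ℝ≥0∞ := fun x => (‖g x‖₊ : ℝ≥0∞) ^ q with hGq
  set J := ∫⁻ x, (Fq x + Gq x) ^ (p-1) ∂μ with hJ
  have hcoe : ∀ (z : ℂ) (s : ℝ), 0 ≤ s → (‖z‖₊ : ℝ≥0∞) ^ s = ENNReal.ofReal (‖z‖ ^ s) := by
    intro z s hs
    rw [← enorm_eq_nnnorm, ← ofReal_norm, ENNReal.ofReal_rpow_of_nonneg (norm_nonneg z) hs]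
  -- pointwise inequality
  have hpt : ∀ x : Ω, (‖f x + g x‖₊ : ℝ≥0∞) ^ p + (‖f x - g x‖₊ : ℝ≥0∞) ^ p
      ≤ 2 * (Fq x + Gq x) ^ (p-1) := by
    intro x
    have hs := scalar_clarkson hp hq (f x) (g x)
    rw [hcoe _ p hp0.le, hcoe _ p hp0.le]
    have hFqx : Fq x = ENNReal.ofReal (‖f x‖ ^ q) := hcoe _ q hq0.le
    have hGqx : Gq x = ENNReal.ofReal (‖g x‖ ^ q) := hcoe _ q hq0.le
    rw [hFqx, hGqx,
      ← ENNReal.ofReal_add (by positivity) (by positivity),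
      ← ENNReal.ofReal_add (by positivity) (by positivity),
      ENNReal.ofReal_rpow_of_nonneg (by positivity) hr0.le]
    calc ENNReal.ofReal (‖f x + g x‖ ^ p + ‖f x - g x‖ ^ p)
        ≤ ENNReal.ofReal (2 * (‖f x‖ ^ q + ‖g x‖ ^ q) ^ (p-1)) := by
          apply ENNReal.ofReal_le_ofReal
          simpa using hs
      _ = 2 * ENNReal.ofReal ((‖f x‖ ^ q + ‖g x‖ ^ q) ^ (p-1)) := by
          rw [ENNReal.ofReal_mul (by norm_num : (0:ℝ) ≤ 2)]
          norm_num
  -- measurability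
  have hmu : AEMeasurable (fun x => (‖f x + g x‖₊ : ℝ≥0∞) ^ p) μ :=
    (hfm.add hgm).enorm.pow_const p
  have hFqm : AEMeasurable Fq μ := hfm.enorm.pow_const q
  have hGqm : AEMeasurable Gq μ := hgm.enorm.pow_const q
  -- step 1
  have h1 : Iu + Iv ≤ 2 * J := by
    calc Iu + Iv
        = ∫⁻ x, ((‖f x + g x‖₊ : ℝ≥0∞) ^ p + (‖f x - g x‖₊ : ℝ≥0∞) ^ p) ∂μ :=
          (lintegral_add_left' hmu _).symm
      _ ≤ ∫⁻ x, 2 * (Fq x + Gq x) ^ (p-1) ∂μ := lintegral_mono hpt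
      _ = 2 * J := lintegral_const_mul' 2 _ (by norm_num)
  -- Minkowski
  have hqr : q * (p-1) = p := by rw [hq]; field_simp
  have hFqr : ∀ x : Ω, Fq x ^ (p-1) = (‖f x‖₊ : ℝ≥0∞) ^ p := by
    intro x
    rw [hFq, ← ENNReal.rpow_mul, hqr]
  have hGqr : ∀ x : Ω, Gq x ^ (p-1) = (‖g x‖₊ : ℝ≥0∞) ^ p := by
    intro x
    rw [hGq, ← ENNReal.rpow_mul, hqr]
  have h2 : J ^ ((1:ℝ)/(p-1)) ≤ If ^ ((1:ℝ)/(p-1)) + Ig ^ ((1:ℝ)/(p-1)) := by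
    have mink := ENNReal.lintegral_Lp_add_le hFqm hGqm hr1
    have e1 : (∫⁻ a, (Fq + Gq) a ^ (p-1) ∂μ) = J := rfl
    have e2 : (∫⁻ a, Fq a ^ (p-1) ∂μ) = If := lintegral_congr hFqr
    have e3 : (∫⁻ a, Gq a ^ (p-1) ∂μ) = Ig := lintegral_congr hGqr
    rwa [e1, e2, e3] at mink
  -- eLpNorm identities
  have hsn : ∀ h : Lp ℂ (ENNReal.ofReal p) μ, eLpNorm (⇑h) (ENNReal.ofReal p) μ = (∫⁻ x, (‖h x‖₊ : ℝ≥0∞) ^ p ∂μ) ^ ((1:ℝ)/p) := by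
    intro h
    rw [eLpNorm_eq_lintegral_rpow_enorm_toReal hP0 hPtop, hPtoReal]
    rfl
  have hIf_fin : If ≠ ∞ := by
    intro hcontra
    have := hsn f
    rw [← hIf] at this
    rw [hcontra, ENNReal.top_rpow_of_pos (by positivity)] at this
    exact Lp.eLpNorm_ne_top f this
  have hIg_fin : Ig ≠ ∞ := by
    intro hcontra
    have := hsn g
    rw [← hIg] at this
    rw [hcontra, ENNReal.top_rpow_of_pos (by positivity)] at this
    exact Lp.eLpNorm_ne_top g this
  have hu : eLpNorm (⇑(f+g)) (ENNReal.ofReal p) μ = Iu ^ ((1:ℝ)/p) := by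
    rw [eLpNorm_congr_ae (Lp.coeFn_add f g), eLpNorm_eq_lintegral_rpow_enorm_toReal hP0 hPtop, hPtoReal]
    rfl
  have hv : eLpNorm (⇑(f-g)) (ENNReal.ofReal p) μ = Iv ^ ((1:ℝ)/p) := by
    rw [eLpNorm_congr_ae (Lp.coeFn_sub f g), eLpNorm_eq_lintegral_rpow_enorm_toReal hP0 hPtop, hPtoReal]
    rfl
  have hIu_fin : Iu ≠ ∞ := by
    intro hcontra
    rw [hcontra, ENNReal.top_rpow_of_pos (by positivity)] at hu
    exact Lp.eLpNorm_ne_top (f+g) hu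
  have hIv_fin : Iv ≠ ∞ := by
    intro hcontra
    rw [hcontra, ENNReal.top_rpow_of_pos (by positivity)] at hv
    exact Lp.eLpNorm_ne_top (f-g) hv
  have hqp : (1:ℝ)/p * q = 1/(p-1) := by rw [hq]; field_simp
  have hfq : If ^ ((1:ℝ)/(p-1)) = (eLpNorm (⇑f) (ENNReal.ofReal p) μ) ^ q := by
    rw [hsn f, ← ENNReal.rpow_mul, hqp]
  have hgq : Ig ^ ((1:ℝ)/(p-1)) = (eLpNorm (⇑g) (ENNReal.ofReal p) μ) ^ q := by
    rw [hsn g, ← ENNReal.rpow_mul, hqp]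
  -- combine in ENNReal
  have h3 : (2⁻¹ * (Iu + Iv)) ≤ J := by
    have := mul_le_mul_right h1 (2⁻¹ : ℝ≥0∞)
    rwa [← mul_assoc, ENNReal.inv_mul_cancel (by norm_num) (by norm_num), one_mul] at this
  have h4 : (2⁻¹ * (Iu + Iv)) ^ ((1:ℝ)/(p-1)) ≤
      (eLpNorm (⇑f) (ENNReal.ofReal p) μ) ^ q + (eLpNorm (⇑g) (ENNReal.ofReal p) μ) ^ q := by
    rw [← hfq, ← hgq]
    exact le_trans (ENNReal.rpow_le_rpow h3 (by positivity)) h2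
  -- to real
  have hnormu : ‖f + g‖ ^ p = Iu.toReal := by
    rw [Lp.norm_def, hu, ← ENNReal.toReal_rpow, ← Real.rpow_mul ENNReal.toReal_nonneg,
      one_div_mul_cancel (ne_of_gt hp0), Real.rpow_one]
  have hnormv : ‖f - g‖ ^ p = Iv.toReal := by
    rw [Lp.norm_def, hv, ← ENNReal.toReal_rpow, ← Real.rpow_mul ENNReal.toReal_nonneg,
      one_div_mul_cancel (ne_of_gt hp0), Real.rpow_one]
  have hRHS_fin : (eLpNorm (⇑f) (ENNReal.ofReal p) μ) ^ q + (eLpNorm (⇑g) (ENNReal.ofReal p) μ) ^ q ≠ ∞ := by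
    apply ENNReal.add_ne_top.mpr
    constructor <;> exact ENNReal.rpow_ne_top_of_nonneg hq0.le (Lp.eLpNorm_ne_top _)
  have h5 := ENNReal.toReal_mono hRHS_fin h4
  rw [ge_iff_le]
  calc ((1:ℝ)/2 * (‖f + g‖ ^ p + ‖f - g‖ ^ p)) ^ ((1:ℝ)/(p-1))
      = ((2⁻¹ * (Iu + Iv) : ℝ≥0∞).toReal) ^ ((1:ℝ)/(p-1)) := by
        rw [hnormu, hnormv, ENNReal.toReal_mul, ENNReal.toReal_add hIu_fin hIv_fin]
        norm_num
    _ = ((2⁻¹ * (Iu + Iv)) ^ ((1:ℝ)/(p-1))).toReal := ENNReal.toReal_rpow _ _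
    _ ≤ ((eLpNorm (⇑f) (ENNReal.ofReal p) μ) ^ q + (eLpNorm (⇑g) (ENNReal.ofReal p) μ) ^ q).toReal := h5
    _ = ‖f‖ ^ q + ‖g‖ ^ q := by
        rw [ENNReal.toReal_add (ENNReal.rpow_ne_top_of_nonneg hq0.le (Lp.eLpNorm_ne_top _))
          (ENNReal.rpow_ne_top_of_nonneg hq0.le (Lp.eLpNorm_ne_top _)),
          ← ENNReal.toReal_rpow, ← ENNReal.toReal_rpow, Lp.norm_def, Lp.norm_def]
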